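/- For compositions α of length m and β of length n, the product of monomial quasisymmetric functions satisfies M_α · M_β = ∑_γ c_{α,β}^γ M_γ, where c_{α,β}^γ is the number of overlapping shuffles τ of (m,n) with γ^τ = γ. -/

import Mathlib

open MvPolynomial Finset
open scoped Classical

/-- An overlapping shuffle of `(m,n)`: a surjection `τ : [m+n] → [k]` that is
strictly increasing on the first `m` elements and on the last `n` elements. -/
def IsOverlappingShuffle (m n : ℕ) {k : ℕ} (τ : Fin (m + n) → Fin k) : Prop :=
  Function.Surjective τ ∧
    (∀ i j : Fin (m + n), (i : ℕ) < (j : ℕ) → (j : ℕ) < m → τ i < τ j) ∧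
    (∀ i j : Fin (m + n), m ≤ (i : ℕ) → (i : ℕ) < (j : ℕ) → τ i < τ j)

/-- The composition `γ^τ` with `γ^τ_i = ∑_{τ(j)=i} (α⌢β)_j`. -/
def gammaComp (α β : List ℕ) {k : ℕ} (τ : Fin (α.length + β.length) → Fin k) : List ℕ :=
  List.ofFn (fun i : Fin k =>
    ∑ j : Fin (α.length + β.length), if τ j = i then (α ++ β).getD (j : ℕ) 0 else 0)

/-- `c_{α,β}^γ`: the number of overlapping shuffles `τ` of `(ℓ(α), ℓ(β))` with
`γ^τ = γ`. -/
noncomputable def shuffleCoeff (α β γ : List ℕ) : ℕ :=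
  Nat.card {τ : Fin (α.length + β.length) → Fin γ.length //
    IsOverlappingShuffle α.length β.length τ ∧ gammaComp α β τ = γ}

/-- The truncated monomial quasisymmetric function
`M_{N,α} = ∑_{i_1 < ⋯ < i_k ≤ N} x_{i_1}^{α_1} ⋯ x_{i_k}^{α_k}`. -/
noncomputable def Mqs (N : ℕ) (α : List ℕ) : MvPolynomial (Fin N) ℤ :=
  ∑ j ∈ Finset.univ.filter (fun j : Fin α.length → Fin N => StrictMono j),
    ∏ t : Fin α.length, X (j t) ^ α.get t

/-! ### Auxiliary machinery -/

section Aux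

variable {m n N : ℕ}

/-- The sigma type collecting `k`, a map `τ : Fin (m+n) → Fin k`, and a map `i : Fin k → Fin N`. -/
abbrev Stmt13SigT (m n N : ℕ) :=
  Σ k : Fin (m + n + 1), (Fin (m + n) → Fin (k : ℕ)) × (Fin (k : ℕ) → Fin N)

noncomputable def stmt13fwd (u : Fin m → Fin N) (v : Fin n → Fin N) : Stmt13SigT m n N :=
  ⟨⟨(Finset.image (Fin.append u v) Finset.univ).card,
      Nat.lt_succ_of_le (le_trans Finset.card_image_le (by simp))⟩,
    fun j => ((Finset.image (Fin.append u v) Finset.univ).orderIsoOfFin rfl).symm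
      ⟨Fin.append u v j, Finset.mem_image_of_mem _ (Finset.mem_univ j)⟩,
    fun r => (((Finset.image (Fin.append u v) Finset.univ).orderIsoOfFin rfl) r : Fin N)⟩

lemma stmt13fwd_comp (u : Fin m → Fin N) (v : Fin n → Fin N) (j : Fin (m + n)) :
    (stmt13fwd u v).2.2 ((stmt13fwd u v).2.1 j) = Fin.append u v j := by
  show ((((Finset.image (Fin.append u v) Finset.univ).orderIsoOfFin rfl)
    (((Finset.image (Fin.append u v) Finset.univ).orderIsoOfFin rfl).symm
      ⟨Fin.append u v j, _⟩) : _) : Fin N) = Fin.append u v j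
  rw [OrderIso.apply_symm_apply]

lemma stmt13fwd_strictMono (u : Fin m → Fin N) (v : Fin n → Fin N) :
    StrictMono (stmt13fwd u v).2.2 := by
  intro a b hab
  exact Subtype.coe_lt_coe.2
    (((Finset.image (Fin.append u v) Finset.univ).orderIsoOfFin rfl).strictMono hab)

lemma stmt13append_lt_left {u : Fin m → Fin N} {v : Fin n → Fin N} (hu : StrictMono u)
    (i j : Fin (m + n)) (hij : (i : ℕ) < (j : ℕ)) (hj : (j : ℕ) < m) :
    Fin.append u v i < Fin.append u v j := by
  have hi : (i : ℕ) < m := lt_trans hij hj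
  have e1 : Fin.append u v i = u ⟨i, hi⟩ :=
    (congrArg (Fin.append u v) (Fin.ext rfl : i = Fin.castAdd n ⟨(i : ℕ), hi⟩)).trans
      (Fin.append_left u v _)
  have e2 : Fin.append u v j = u ⟨j, hj⟩ :=
    (congrArg (Fin.append u v) (Fin.ext rfl : j = Fin.castAdd n ⟨(j : ℕ), hj⟩)).trans
      (Fin.append_left u v _)
  rw [e1, e2]
  exact hu hij

lemma stmt13append_lt_right {u : Fin m → Fin N} {v : Fin n → Fin N} (hv : StrictMono v)
    (i j : Fin (m + n)) (hi : m ≤ (i : ℕ)) (hij : (i : ℕ) < (j : ℕ)) :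
    Fin.append u v i < Fin.append u v j := by
  have hj : m ≤ (j : ℕ) := le_of_lt (lt_of_le_of_lt hi hij)
  have hi' : (i : ℕ) - m < n := by have := i.isLt; omega
  have hj' : (j : ℕ) - m < n := by have := j.isLt; omega
  have e1 : Fin.append u v i = v ⟨(i : ℕ) - m, hi'⟩ :=
    (congrArg (Fin.append u v)
      (Fin.ext (by simp; omega) : i = Fin.natAdd m ⟨(i : ℕ) - m, hi'⟩)).trans
      (Fin.append_right u v _)
  have e2 : Fin.append u v j = v ⟨(j : ℕ) - m, hj'⟩ :=
    (congrArg (Fin.append u v)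
      (Fin.ext (by simp; omega) : j = Fin.natAdd m ⟨(j : ℕ) - m, hj'⟩)).trans
      (Fin.append_right u v _)
  rw [e1, e2]
  exact hv (show (i : ℕ) - m < (j : ℕ) - m by omega)

lemma stmt13fwd_shuffle {u : Fin m → Fin N} {v : Fin n → Fin N} (hu : StrictMono u)
    (hv : StrictMono v) : IsOverlappingShuffle m n (stmt13fwd u v).2.1 := by
  set S := Finset.image (Fin.append u v) Finset.univ with hS
  set oe := S.orderIsoOfFin rfl with hoe
  refine ⟨?_, ?_, ?_⟩
  · intro r
    obtain ⟨j, -, hj⟩ := Finset.mem_image.1 (oe r).2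
    refine ⟨j, ?_⟩
    show oe.symm ⟨Fin.append u v j, _⟩ = r
    rw [show (⟨Fin.append u v j, _⟩ : {x // x ∈ S}) = oe r from Subtype.ext hj]
    exact oe.symm_apply_apply r
  · intro i j hij hj
    exact (OrderIso.lt_iff_lt oe.symm).2
      (Subtype.mk_lt_mk.2 (stmt13append_lt_left hu i j hij hj))
  · intro i j hi hij
    exact (OrderIso.lt_iff_lt oe.symm).2
      (Subtype.mk_lt_mk.2 (stmt13append_lt_right hv i j hi hij))

noncomputable def stmt13bwdu (q : Stmt13SigT m n N) : Fin m → Fin N :=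
  fun t => q.2.2 (q.2.1 (Fin.castAdd n t))
noncomputable def stmt13bwdv (q : Stmt13SigT m n N) : Fin n → Fin N :=
  fun s => q.2.2 (q.2.1 (Fin.natAdd m s))

lemma stmt13bwdu_mono {q : Stmt13SigT m n N} (hs : IsOverlappingShuffle m n q.2.1)
    (hi : StrictMono q.2.2) : StrictMono (stmt13bwdu q) := fun a b hab =>
  hi (hs.2.1 (Fin.castAdd n a) (Fin.castAdd n b) hab b.isLt)

lemma stmt13bwdv_mono {q : Stmt13SigT m n N} (hs : IsOverlappingShuffle m n q.2.1)
    (hi : StrictMono q.2.2) : StrictMono (stmt13bwdv q) := fun a b hab =>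
  hi (hs.2.2 (Fin.natAdd m a) (Fin.natAdd m b) (Nat.le_add_right m a) (by simpa using hab))

lemma Stmt13SigT_ext {q q' : Stmt13SigT m n N} (h1 : (q.1 : ℕ) = (q'.1 : ℕ))
    (h2 : ∀ j, ((q.2.1 j : ℕ)) = ((q'.2.1 j : ℕ)))
    (h3 : ∀ (r : Fin (q.1 : ℕ)) (r' : Fin (q'.1 : ℕ)), (r : ℕ) = (r' : ℕ) →
      q.2.2 r = q'.2.2 r') : q = q' := by
  obtain ⟨⟨k, hk⟩, τ, i⟩ := q
  obtain ⟨⟨k', hk'⟩, τ', i'⟩ := q'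
  simp only at h1 h2 h3
  subst h1
  refine Sigma.ext rfl (heq_of_eq (Prod.ext ?_ ?_))
  · exact funext fun j => Fin.ext (h2 j)
  · exact funext fun r => h3 r r rfl

noncomputable def stmt13Equiv (m n N : ℕ) :
    {p : (Fin m → Fin N) × (Fin n → Fin N) // StrictMono p.1 ∧ StrictMono p.2} ≃
    {q : Stmt13SigT m n N // IsOverlappingShuffle m n q.2.1 ∧ StrictMono q.2.2} where
  toFun p := ⟨stmt13fwd p.1.1 p.1.2, stmt13fwd_shuffle p.2.1 p.2.2, stmt13fwd_strictMono _ _⟩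
  invFun q := ⟨(stmt13bwdu q.1, stmt13bwdv q.1),
    stmt13bwdu_mono q.2.1 q.2.2, stmt13bwdv_mono q.2.1 q.2.2⟩
  left_inv := by
    rintro ⟨⟨u, v⟩, hu, hv⟩
    apply Subtype.ext
    apply Prod.ext <;> funext t
    · show (stmt13fwd u v).2.2 ((stmt13fwd u v).2.1 (Fin.castAdd n t)) = u t
      rw [stmt13fwd_comp, Fin.append_left]
    · show (stmt13fwd u v).2.2 ((stmt13fwd u v).2.1 (Fin.natAdd m t)) = v t
      rw [stmt13fwd_comp, Fin.append_right]
  right_inv := by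
    rintro ⟨⟨k, τ, i⟩, hsh, hmono⟩
    apply Subtype.ext
    show stmt13fwd (stmt13bwdu ⟨k, (τ, i)⟩) (stmt13bwdv ⟨k, (τ, i)⟩) =
      (⟨k, (τ, i)⟩ : Stmt13SigT m n N)
    set u := stmt13bwdu (⟨k, (τ, i)⟩ : Stmt13SigT m n N) with hu
    set v := stmt13bwdv (⟨k, (τ, i)⟩ : Stmt13SigT m n N) with hv
    have hf : Fin.append u v = fun j => i (τ j) := by
      funext j
      refine Fin.addCases (motive := fun j => Fin.append u v j = i (τ j)) ?_ ?_ j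
      · intro t; exact Fin.append_left u v t
      · intro s; exact Fin.append_right u v s
    have hS : Finset.image (Fin.append u v) Finset.univ = Finset.image i Finset.univ := by
      rw [hf, show (fun j => i (τ j)) = i ∘ τ from rfl, ← Finset.image_image,
        Finset.image_univ_of_surjective hsh.1]
    have hcard : (Finset.image (Fin.append u v) Finset.univ).card = (k : ℕ) := by
      rw [hS, Finset.card_image_of_injective _ hmono.injective, Finset.card_univ,
        Fintype.card_fin]
    set S := Finset.image (Fin.append u v) Finset.univ with hSdef
    have hiemb : i = fun r => S.orderEmbOfFin hcard r :=
      Finset.orderEmbOfFin_unique hcard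
        (fun x => hS ▸ Finset.mem_image_of_mem i (Finset.mem_univ x)) hmono
    have hfwdi : ∀ r : Fin S.card, (stmt13fwd u v).2.2 r = S.orderEmbOfFin rfl r := by
      intro r
      show ((S.orderIsoOfFin rfl) r : Fin N) = _
      rw [Finset.coe_orderIsoOfFin_apply]
    have hfwdτ : ∀ j, S.orderEmbOfFin rfl ((stmt13fwd u v).2.1 j) = Fin.append u v j := by
      intro j
      show (((S.orderIsoOfFin rfl) ((S.orderIsoOfFin rfl).symm ⟨Fin.append u v j, _⟩)) :
        Fin N) = _
      rw [OrderIso.apply_symm_apply]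
    refine Stmt13SigT_ext hcard (fun j => ?_) (fun r r' hrr => ?_)
    · have : S.orderEmbOfFin rfl ((stmt13fwd u v).2.1 j) = S.orderEmbOfFin hcard (τ j) := by
        rw [hfwdτ, hf, ← congrFun hiemb (τ j)]
      exact Finset.orderEmbOfFin_eq_orderEmbOfFin_iff.1 this
    · show (stmt13fwd u v).2.2 r = i r'
      rw [hfwdi r, congrFun hiemb r']
      exact Finset.orderEmbOfFin_eq_orderEmbOfFin_iff.2 hrr

end Aux

/-! ### Lemmas about `gammaComp`, `shuffleCoeff` and `Mqs` -/

abbrev ShufT (α β : List ℕ) :=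
  {q : Σ k : Fin (α.length + β.length + 1), Fin (α.length + β.length) → Fin (k : ℕ) //
    IsOverlappingShuffle α.length β.length q.2}

noncomputable instance (α β : List ℕ) : Fintype (ShufT α β) := by
  unfold ShufT; infer_instance

lemma length_gammaComp (α β : List ℕ) {k : ℕ} (τ : Fin (α.length + β.length) → Fin k) :
    (gammaComp α β τ).length = k := by simp [gammaComp]

lemma gammaComp_cast (α β : List ℕ) {k k' : ℕ} (h : k = k')
    (τ : Fin (α.length + β.length) → Fin k) :
    gammaComp α β (fun j => Fin.cast h (τ j)) = gammaComp α β τ := by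
  apply List.ext_getElem
  · simp [length_gammaComp, h]
  · intro i h1 h2
    unfold gammaComp at h1 h2 ⊢
    rw [List.getElem_ofFn, List.getElem_ofFn]
    refine Finset.sum_congr rfl fun j _ => ?_
    refine if_congr ?_ rfl rfl
    simp [Fin.ext_iff]

lemma shuffle_cast {m n k k' : ℕ} (h : k = k') {τ : Fin (m + n) → Fin k}
    (hs : IsOverlappingShuffle m n τ) :
    IsOverlappingShuffle m n (fun j => Fin.cast h (τ j)) := by
  refine ⟨fun r => ?_, hs.2.1, hs.2.2⟩
  obtain ⟨j, hj⟩ := hs.1 (Fin.cast h.symm r)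
  exact ⟨j, by show Fin.cast h (τ j) = r; rw [hj]; exact Fin.ext rfl⟩

lemma shuffle_surj_le {m n k : ℕ} {τ : Fin (m + n) → Fin k}
    (h : IsOverlappingShuffle m n τ) : k ≤ m + n := by
  have := Fintype.card_le_of_surjective τ h.1
  simpa using this

lemma ShufSig_ext {M K : ℕ} {q q' : Σ k : Fin K, Fin M → Fin (k : ℕ)}
    (h1 : (q.1 : ℕ) = (q'.1 : ℕ)) (h2 : ∀ j, ((q.2 j : ℕ)) = ((q'.2 j : ℕ))) : q = q' := by
  obtain ⟨⟨k, hk⟩, τ⟩ := q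
  obtain ⟨⟨k', hk'⟩, τ'⟩ := q'
  simp only at h1 h2
  subst h1
  exact Sigma.ext rfl (heq_of_eq (funext fun j => Fin.ext (h2 j)))

lemma card_k_eq {α β γ : List ℕ} (q : ShufT α β) (h : gammaComp α β q.1.2 = γ) :
    ((q.1.1 : ℕ)) = γ.length :=
  (length_gammaComp α β q.1.2).symm.trans (congrArg List.length h)

lemma shuffleCoeff_eq_card (α β γ : List ℕ) :
    shuffleCoeff α β γ =
      (Finset.univ.filter (fun q : ShufT α β => gammaComp α β q.1.2 = γ)).card := by
  rw [← Fintype.card_subtype, ← Nat.card_eq_fintype_card]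
  unfold shuffleCoeff
  apply Nat.card_congr
  exact
    { toFun := fun τ =>
        ⟨⟨⟨⟨γ.length, Nat.lt_succ_of_le (shuffle_surj_le τ.2.1)⟩, τ.1⟩, τ.2.1⟩, τ.2.2⟩
      invFun := fun q =>
        ⟨fun j => Fin.cast (card_k_eq q.1 q.2) (q.1.1.2 j),
          shuffle_cast (card_k_eq q.1 q.2) q.1.2,
          (gammaComp_cast α β (card_k_eq q.1 q.2) q.1.1.2).trans q.2⟩
      left_inv := fun τ => Subtype.ext (funext fun j => Fin.ext rfl)
      right_inv := fun q => Subtype.ext (Subtype.ext (ShufSig_ext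
        (card_k_eq q.1 q.2).symm (fun j => rfl))) }

lemma stmt13monom_eq {N k M : ℕ} (i : Fin k → Fin N) (τ : Fin M → Fin k) (w : Fin M → ℕ) :
    ∏ r : Fin k, X (i r) ^ (∑ j : Fin M, if τ j = r then w j else 0) =
      (∏ j : Fin M, (X (i (τ j)) ^ w j : MvPolynomial (Fin N) ℤ)) := by
  have : ∀ r : Fin k, (X (i r) ^ (∑ j : Fin M, if τ j = r then w j else 0) :
      MvPolynomial (Fin N) ℤ) = ∏ j : Fin M, (if τ j = r then X (i r) ^ w j else 1) := by
    intro r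
    rw [← Finset.prod_pow_eq_pow_sum]
    exact Finset.prod_congr rfl fun j _ => by split <;> simp
  simp_rw [this]
  rw [Finset.prod_comm]
  refine Finset.prod_congr rfl fun j _ => ?_
  rw [Finset.prod_ite_eq Finset.univ (τ j) (fun r => X (i r) ^ w j)]
  simp

lemma Mqs_gammaComp (α β : List ℕ) {k : ℕ} (τ : Fin (α.length + β.length) → Fin k) (N : ℕ) :
    Mqs N (gammaComp α β τ) =
      ∑ i ∈ Finset.univ.filter (fun i : Fin k → Fin N => StrictMono i),
        ∏ j : Fin (α.length + β.length), X (i (τ j)) ^ (α ++ β).getD (j : ℕ) 0 := by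
  have hlen : (gammaComp α β τ).length = k := length_gammaComp α β τ
  unfold Mqs
  refine Finset.sum_bij' (fun j _ => fun r : Fin k => j (Fin.cast hlen.symm r))
    (fun i _ => fun t => i (Fin.cast hlen t)) ?_ ?_ ?_ ?_ ?_
  · intro j hj
    simp only [mem_filter, mem_univ, true_and] at hj ⊢
    intro a b hab
    exact hj hab
  · intro i hi
    simp only [mem_filter, mem_univ, true_and] at hi ⊢
    intro a b hab
    exact hi hab
  · intro j _; funext t; exact congrArg j (Fin.ext rfl)
  · intro i _; funext r; exact congrArg i (Fin.ext rfl)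
  · intro j _
    rw [← stmt13monom_eq (fun r : Fin k => j (Fin.cast hlen.symm r)) τ]
    refine Finset.prod_nbij' (fun t => Fin.cast hlen t) (fun r => Fin.cast hlen.symm r)
      (fun _ _ => mem_univ _) (fun _ _ => mem_univ _) (fun t _ => Fin.ext rfl)
      (fun r _ => Fin.ext rfl) ?_
    intro t _
    have e1 : j (Fin.cast hlen.symm (Fin.cast hlen t)) = j t := congrArg j (Fin.ext rfl)
    have e2 : (gammaComp α β τ).get t = ∑ j' : Fin (α.length + β.length),
        if τ j' = Fin.cast hlen t then (α ++ β).getD (j' : ℕ) 0 else 0 := by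
      rw [List.get_eq_getElem]
      unfold gammaComp
      rw [List.getElem_ofFn]
      rfl
    rw [e1, e2]

lemma Mqs_mul' (α β : List ℕ) (N : ℕ) :
    Mqs N α * Mqs N β =
      ∑ p ∈ (Finset.univ.filter (fun j : Fin α.length → Fin N => StrictMono j)) ×ˢ
          (Finset.univ.filter (fun j : Fin β.length → Fin N => StrictMono j)),
        ∏ j : Fin (α.length + β.length),
          X (Fin.append p.1 p.2 j) ^ (α ++ β).getD (j : ℕ) 0 := by
  unfold Mqs
  rw [Finset.sum_mul_sum, Finset.sum_product]
  refine Finset.sum_congr rfl fun j1 _ => Finset.sum_congr rfl fun j2 _ => ?_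
  rw [Fin.prod_univ_add]
  congr 1
  · refine Finset.prod_congr rfl fun t _ => ?_
    rw [Fin.append_left]
    congr 1
    rw [show ((Fin.castAdd β.length t : Fin (α.length + β.length)) : ℕ) = (t : ℕ) from rfl,
      List.getD_append _ _ _ _ t.isLt, List.getD_eq_getElem _ _ t.isLt, List.get_eq_getElem]
  · refine Finset.prod_congr rfl fun s _ => ?_
    rw [Fin.append_right]
    congr 1
    rw [show ((Fin.natAdd α.length s : Fin (α.length + β.length)) : ℕ) = α.length + s from rfl,
      List.getD_append_right _ _ _ _ (Nat.le_add_right _ _)]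
    rw [Nat.add_sub_cancel_left, List.getD_eq_getElem _ _ s.isLt, List.get_eq_getElem]

/-- splitting the combined subtype as a sigma type -/
noncomputable def stmt13Split (α β : List ℕ) (N : ℕ) :
    {q : Stmt13SigT α.length β.length N //
      IsOverlappingShuffle α.length β.length q.2.1 ∧ StrictMono q.2.2} ≃
    Σ q0 : ShufT α β, {i : Fin ((q0.1.1 : ℕ)) → Fin N // StrictMono i} where
  toFun q := ⟨⟨⟨q.1.1, q.1.2.1⟩, q.2.1⟩, ⟨q.1.2.2, q.2.2⟩⟩
  invFun x := ⟨⟨x.1.1.1, x.1.1.2, x.2.1⟩, x.1.2, x.2.2⟩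
  left_inv q := rfl
  right_inv x := rfl

/-- Hazewinkel's rule: `M_α · M_β = ∑_γ c_{α,β}^γ M_γ`, where `c_{α,β}^γ` counts
overlapping shuffles of `(ℓ(α), ℓ(β))` producing `γ`. -/
theorem stmt_13 (α β : List ℕ) (hα : ∀ a ∈ α, 0 < a) (hβ : ∀ a ∈ β, 0 < a) (N : ℕ) :
    Mqs N α * Mqs N β = ∑ᶠ γ : List ℕ, (shuffleCoeff α β γ : ℤ) • Mqs N γ := by
  classical
  -- the common middle expression
  set MID : MvPolynomial (Fin N) ℤ :=
    ∑ q : {q : Stmt13SigT α.length β.length N //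
        IsOverlappingShuffle α.length β.length q.2.1 ∧ StrictMono q.2.2},
      ∏ j : Fin (α.length + β.length),
        X (q.1.2.2 (q.1.2.1 j)) ^ (α ++ β).getD (j : ℕ) 0 with hMID
  have hL : Mqs N α * Mqs N β = MID := by
    rw [Mqs_mul' α β N]
    rw [Finset.sum_subtype ((Finset.univ.filter
        (fun j : Fin α.length → Fin N => StrictMono j)) ×ˢ
        (Finset.univ.filter (fun j : Fin β.length → Fin N => StrictMono j)))
      (p := fun p : (Fin α.length → Fin N) × (Fin β.length → Fin N) =>
        StrictMono p.1 ∧ StrictMono p.2)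
      (fun p => by simp [Finset.mem_product])]
    rw [hMID]
    refine Fintype.sum_equiv (stmt13Equiv α.length β.length N) _ _ fun p => ?_
    refine Finset.prod_congr rfl fun j _ => ?_
    rw [show ((stmt13Equiv α.length β.length N) p).1.2.2
        (((stmt13Equiv α.length β.length N) p).1.2.1 j) = Fin.append p.1.1 p.1.2 j from
      stmt13fwd_comp p.1.1 p.1.2 j]
  have hR : ∑ᶠ γ : List ℕ, (shuffleCoeff α β γ : ℤ) • Mqs N γ = MID := by
    have hsupp : (Function.support fun γ => (shuffleCoeff α β γ : ℤ) • Mqs N γ) ⊆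
        ↑(Finset.univ.image (fun q : ShufT α β => gammaComp α β q.1.2)) := by
      intro γ hγ
      have hc : shuffleCoeff α β γ ≠ 0 := by
        intro h0
        apply hγ
        simp [h0]
      have hne : Nonempty {τ : Fin (α.length + β.length) → Fin γ.length //
          IsOverlappingShuffle α.length β.length τ ∧ gammaComp α β τ = γ} :=
        (Nat.card_ne_zero.1 hc).1
      obtain ⟨τ, hs, hγc⟩ := hne
      refine Finset.mem_coe.2 (Finset.mem_image.2
        ⟨⟨⟨⟨γ.length, Nat.lt_succ_of_le (shuffle_surj_le hs)⟩, τ⟩, hs⟩, Finset.mem_univ _, hγc⟩)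
    rw [finsum_eq_sum_of_support_subset _ hsupp]
    have hcount : ∀ γ ∈ Finset.univ.image (fun q : ShufT α β => gammaComp α β q.1.2),
        (shuffleCoeff α β γ : ℤ) • Mqs N γ =
        (Finset.univ.filter (fun q : ShufT α β => gammaComp α β q.1.2 = γ)).card • Mqs N γ := by
      intro γ _
      rw [shuffleCoeff_eq_card α β γ, natCast_zsmul]
    rw [Finset.sum_congr rfl hcount]
    rw [← Finset.sum_comp (fun γ => Mqs N γ) (fun q : ShufT α β => gammaComp α β q.1.2)]
    rw [Finset.sum_congr rfl (fun q _ => Mqs_gammaComp α β q.1.2 N)]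
    rw [Finset.sum_congr rfl (fun q (_ : q ∈ Finset.univ) =>
      Finset.sum_subtype (Finset.univ.filter
        (fun i : Fin ((q.1.1 : ℕ)) → Fin N => StrictMono i))
        (p := fun i : Fin ((q.1.1 : ℕ)) → Fin N => StrictMono i)
        (fun i => by simp) _)]
    rw [Finset.sum_sigma', Finset.univ_sigma_univ, hMID]
    exact (Equiv.sum_comp (stmt13Split α β N)
      (fun x : Σ q0 : ShufT α β, {i : Fin ((q0.1.1 : ℕ)) → Fin N // StrictMono i} =>
        ∏ j : Fin (α.length + β.length),
          X (x.2.1 (x.1.1.2 j)) ^ (α ++ β).getD (j : ℕ) 0)).symm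
  rw [hL, hR]
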